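/- For a strictly increasing sequence of integers a_0 = 0 < a_1 < ... < a_n and q a positive real number (q ≠ 1), the determinant of the (n+1)×(n+1) matrix with entries A_{i,j} = [a_i + j choose j]_q equals q^{n(n+1)(2n+1)/6} times the ratio of Vandermonde determinants Δ(q^{a_0}, q^{a_1}, ..., q^{a_n}) / Δ(1, q, q^2, ..., q^n), where Δ(x_0,...,x_n) = prod_{i<j}(x_j - x_i). -/

import Mathlib

open Finset

/-- The Gaussian (q-)binomial coefficient `[a choose b]_q`. -/
noncomputable def qbinom (q : ℝ) (a b : ℕ) : ℝ :=
  if b ≤ a then ∏ s ∈ Finset.Icc 1 b, (q ^ (s + a - b) - 1) / (q ^ s - 1) else 0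

/-- The Vandermonde product `Δ(x_0,…,x_{m-1}) = ∏_{i<j} (x_j - x_i)`. -/
noncomputable def vand {m : ℕ} (x : Fin m → ℝ) : ℝ :=
  ∏ p ∈ Finset.univ.filter (fun p : Fin m × Fin m => p.1 < p.2), (x p.2 - x p.1)

lemma pair_Ioi {m : ℕ} (f : Fin m → Fin m → ℝ) :
    ∏ p ∈ Finset.univ.filter (fun p : Fin m × Fin m => p.1 < p.2), f p.1 p.2
      = ∏ i, ∏ j ∈ Ioi i, f i j := by
  rw [Finset.prod_sigma']
  refine Finset.prod_nbij' (fun p : Fin m × Fin m => (⟨p.1, p.2⟩ : Σ _ : Fin m, Fin m))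
    (fun σ : Σ _ : Fin m, Fin m => (σ.1, σ.2)) ?_ ?_ ?_ ?_ ?_ <;>
    simp [Finset.mem_sigma]

lemma pair_Iio {m : ℕ} (f : Fin m → Fin m → ℝ) :
    ∏ p ∈ Finset.univ.filter (fun p : Fin m × Fin m => p.1 < p.2), f p.1 p.2
      = ∏ j, ∏ i ∈ Iio j, f i j := by
  rw [Finset.prod_sigma']
  refine Finset.prod_nbij' (fun p : Fin m × Fin m => (⟨p.2, p.1⟩ : Σ _ : Fin m, Fin m))
    (fun σ : Σ _ : Fin m, Fin m => (σ.2, σ.1)) ?_ ?_ ?_ ?_ ?_ <;>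
    simp [Finset.mem_sigma]

lemma fin_Iio_prod {m : ℕ} (j : Fin m) (g : ℕ → ℝ) :
    ∏ i ∈ Iio j, g (i : ℕ) = ∏ k ∈ Finset.range (j : ℕ), g k := by
  rw [← Nat.Iio_eq_range, ← Fin.map_valEmbedding_Iio, Finset.prod_map]
  rfl

lemma icc_prod (j : ℕ) (g : ℕ → ℝ) :
    ∏ s ∈ Icc 1 j, g s = ∏ k ∈ Finset.range j, g (1 + k) := by
  rw [← Finset.Ico_add_one_right_eq_Icc, Finset.prod_Ico_eq_prod_range]
  simp

lemma icc_sum (j : ℕ) (g : ℕ → ℕ) :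
    ∑ s ∈ Icc 1 j, g s = ∑ k ∈ Finset.range j, g (1 + k) := by
  rw [← Finset.Ico_add_one_right_eq_Icc, Finset.sum_Ico_eq_sum_range]
  simp

lemma sumsq (n : ℕ) : (∑ j ∈ Finset.range (n + 1), j ^ 2) * 6 = n * (n + 1) * (2 * n + 1) := by
  induction n with
  | zero => simp
  | succ m ih => rw [Finset.sum_range_succ, add_mul, ih]; ring

theorem stmt2 (n : ℕ) (a : ℕ → ℕ) (ha0 : a 0 = 0) (hmono : StrictMono a)
    (q : ℝ) (hq0 : 0 < q) (hq1 : q ≠ 1) :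
    Matrix.det (Matrix.of fun i j : Fin (n + 1) => qbinom q (a i + j) j) =
      q ^ (n * (n + 1) * (2 * n + 1) / 6) *
        (vand (fun i : Fin (n + 1) => q ^ a i) /
          vand (fun i : Fin (n + 1) => q ^ (i : ℕ))) := by
  have hqne : q ≠ 0 := ne_of_gt hq0
  -- q^s ≠ 1 for s ≥ 1
  have hD1 : ∀ s : ℕ, s ≠ 0 → q ^ s - 1 ≠ 0 := by
    intro s hs
    rcases hq1.lt_or_gt with h | h
    · have : q ^ s < 1 := pow_lt_one₀ (le_of_lt hq0) h hs
      linarith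
    · have : 1 < q ^ s := one_lt_pow₀ h hs
      linarith
  set x : Fin (n + 1) → ℝ := fun i => q ^ a i with hx
  set p : Fin (n + 1) → Polynomial ℝ :=
    fun j => ∏ s ∈ Icc 1 (j : ℕ), (Polynomial.X - Polynomial.C (q⁻¹ ^ s)) with hp
  set v : Fin (n + 1) → ℝ :=
    fun j => (∏ s ∈ Icc 1 (j : ℕ), q ^ s) / (∏ s ∈ Icc 1 (j : ℕ), (q ^ s - 1)) with hv
  set D : Fin (n + 1) → ℝ := fun j => ∏ s ∈ Icc 1 (j : ℕ), (q ^ s - 1) with hDdef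
  have hDne : ∀ j, D j ≠ 0 := by
    intro j
    exact Finset.prod_ne_zero_iff.2 fun s hs => hD1 s (by simp at hs; omega)
  -- the entries
  have key : ∀ i j : Fin (n + 1),
      qbinom q (a i + (j : ℕ)) (j : ℕ) = v j * Polynomial.eval (x i) (p j) := by
    intro i j
    rw [qbinom, if_pos (Nat.le_add_left _ _)]
    have h1 : ∀ s ∈ Icc 1 (j : ℕ),
        (q ^ (s + (a i + (j : ℕ)) - (j : ℕ)) - 1) / (q ^ s - 1)
          = (q ^ s * (x i - q⁻¹ ^ s)) / (q ^ s - 1) := by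
      intro s hs
      congr 1
      have hexp : s + (a i + (j : ℕ)) - (j : ℕ) = s + a i := by omega
      rw [hexp, pow_add, hx]
      have : q ^ s * q⁻¹ ^ s = 1 := by
        rw [← mul_pow, mul_inv_cancel₀ hqne, one_pow]
      ring_nf
      rw [mul_comm (q ^ s) (q ^ a i)]
      nlinarith [this]
    rw [Finset.prod_congr rfl h1, Finset.prod_div_distrib, Finset.prod_mul_distrib]
    have heval : Polynomial.eval (x i) (p j) = ∏ s ∈ Icc 1 (j : ℕ), (x i - q⁻¹ ^ s) := by
      rw [hp]
      simp [Polynomial.eval_prod]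
    rw [heval, hv]
    ring
  -- rewrite the matrix and pull out column factors
  have hmat : (Matrix.of fun i j : Fin (n + 1) => qbinom q (a i + j) j)
      = Matrix.of fun i j : Fin (n + 1) => v j * (Polynomial.eval (x i) (p j)) := by
    ext i j; exact key i j
  rw [hmat, Matrix.det_mul_row v (fun i j => Polynomial.eval (x i) (p j))]
  have hmonic : ∀ j : Fin (n + 1), (p j).Monic := fun j =>
    Polynomial.monic_prod_of_monic _ _ fun s _ => Polynomial.monic_X_sub_C _
  have hdeg : ∀ j : Fin (n + 1), (p j).natDegree = (j : ℕ) := by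
    intro j
    rw [hp, Polynomial.natDegree_prod_of_monic _ _ fun s _ => Polynomial.monic_X_sub_C _]
    simp [Polynomial.natDegree_X_sub_C]
  have hdet : (Matrix.det fun i j : Fin (n + 1) => Polynomial.eval (x i) (p j))
      = ∏ i, ∏ j ∈ Ioi i, (x j - x i) := by
    rw [show (fun i j : Fin (n + 1) => Polynomial.eval (x i) (p j))
        = Matrix.of fun i j : Fin (n + 1) => Polynomial.eval (x i) (p j) from rfl,
      ← Matrix.det_eval_matrixOfPolynomials_eq_det_vandermonde x p hdeg hmonic,
      Matrix.det_vandermonde]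
  rw [hdet]
  -- rewrite vands
  have hvx : vand x = ∏ i, ∏ j ∈ Ioi i, (x j - x i) := by
    rw [vand]; exact pair_Ioi fun i j => x j - x i
  have hW : vand (fun i : Fin (n + 1) => q ^ (i : ℕ))
      = ∏ j : Fin (n + 1), (∏ k ∈ Finset.range (j : ℕ), q ^ k) * D j := by
    rw [vand, pair_Iio fun i j : Fin (n + 1) => q ^ (j : ℕ) - q ^ (i : ℕ)]
    refine Finset.prod_congr rfl fun j _ => ?_
    rw [fin_Iio_prod j (fun k => q ^ (j : ℕ) - q ^ k)]
    have h2 : ∀ k ∈ Finset.range (j : ℕ),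
        q ^ (j : ℕ) - q ^ k = q ^ k * (q ^ ((j : ℕ) - k) - 1) := by
      intro k hk
      rw [Finset.mem_range] at hk
      rw [mul_sub, mul_one, ← pow_add]
      congr 2
      omega
    rw [Finset.prod_congr rfl h2, Finset.prod_mul_distrib]
    congr 1
    show _ = ∏ s ∈ Icc 1 (j : ℕ), (q ^ s - 1)
    rw [icc_prod (j : ℕ) (fun s => q ^ s - 1), ← Finset.prod_range_reflect]
    refine Finset.prod_congr rfl fun k hk => ?_
    rw [Finset.mem_range] at hk
    congr 2
    omega
  rw [hvx, hW]
  -- now pure algebra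
  have hQ1 : ∀ j : Fin (n + 1), (∏ k ∈ Finset.range (j : ℕ), q ^ k)
      = q ^ (∑ k ∈ Finset.range (j : ℕ), k) := by
    intro j; rw [Finset.prod_pow_eq_pow_sum]
  have hQ2 : ∀ j : Fin (n + 1), (∏ s ∈ Icc 1 (j : ℕ), q ^ s)
      = q ^ (∑ s ∈ Icc 1 (j : ℕ), s) := by
    intro j; rw [Finset.prod_pow_eq_pow_sum]
  have hvprod : (∏ j, v j)
      = q ^ (∑ j : Fin (n + 1), ∑ s ∈ Icc 1 (j : ℕ), s) / ∏ j, D j := by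
    rw [hv, Finset.prod_div_distrib]
    congr 1
    rw [← Finset.prod_pow_eq_pow_sum]
    exact Finset.prod_congr rfl fun j _ => hQ2 j
  have hWval : (∏ j : Fin (n + 1), (∏ k ∈ Finset.range (j : ℕ), q ^ k) * D j)
      = q ^ (∑ j : Fin (n + 1), ∑ k ∈ Finset.range (j : ℕ), k) * ∏ j, D j := by
    rw [Finset.prod_mul_distrib]
    congr 1
    rw [← Finset.prod_pow_eq_pow_sum]
    exact Finset.prod_congr rfl fun j _ => hQ1 j
  rw [hvprod, hWval]
  -- exponent bookkeeping
  have hsum : (∑ j : Fin (n + 1), ∑ s ∈ Icc 1 (j : ℕ), s)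
      + (∑ j : Fin (n + 1), ∑ k ∈ Finset.range (j : ℕ), k)
      = n * (n + 1) * (2 * n + 1) / 6 := by
    rw [← Finset.sum_add_distrib]
    have h3 : ∀ j : Fin (n + 1),
        (∑ s ∈ Icc 1 (j : ℕ), s) + (∑ k ∈ Finset.range (j : ℕ), k) = (j : ℕ) ^ 2 := by
      intro j
      rcases Nat.eq_zero_or_pos (j : ℕ) with h0 | h0
      · simp [h0]
      · rw [icc_sum (j : ℕ) (fun s => s)]
        have h4 := Finset.sum_range_id_mul_two (j : ℕ)
        have h5 : (∑ k ∈ Finset.range (j : ℕ), (1 + k))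
            = (j : ℕ) + ∑ k ∈ Finset.range (j : ℕ), k := by
          rw [Finset.sum_add_distrib]; simp
        rw [h5]
        have h6 : (j : ℕ) - 1 + 1 = (j : ℕ) := Nat.sub_add_cancel h0
        nlinarith [h4, h6]
    rw [Finset.sum_congr rfl fun j _ => h3 j, Fin.sum_univ_eq_sum_range (fun j => j ^ 2)]
    have := sumsq n
    omega
  have hprodD : (∏ j, D j) ≠ 0 := Finset.prod_ne_zero_iff.2 fun j _ => hDne j
  have hqpow : ∀ m : ℕ, q ^ m ≠ 0 := fun m => pow_ne_zero m hqne
  field_simp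
  rw [← hsum, pow_add]
  ring
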